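/- Let A = (1,0,0), B = (0,1,0), C = (0,0,1), D = (1/3,1/3,1/3) in ℝ³. Define x(A) = (1,1,0), x(B) = (0,1,1), x(C) = (1,0,1), x(D) = (0,1,1). Suppose p : {A,B,C,D} → ℝ is any payment rule such that for all t, t' ∈ {A,B,C,D}, ⟨t, x(t)⟩ - p(t) ≥ ⟨t, x(t')⟩ - p(t'). Then p(A) = p(B) = p(C) = p(D). -/
import Mathlib


open Finset

/-- Standard inner product on ℝ^n. -/
def dot {n : ℕ} (x y : Fin n → ℝ) : ℝ := ∑ i, x i * y i

/-- Payment-locking lemma for the opponent-type-A column: any payments making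
the given allocation rule DSIC must be equal on all four types. -/
theorem stmt5 (x : (Fin 3 → ℝ) → Fin 3 → ℝ) (p : (Fin 3 → ℝ) → ℝ)
    (A B C D : Fin 3 → ℝ)
    (hA : A = ![1, 0, 0]) (hB : B = ![0, 1, 0]) (hC : C = ![0, 0, 1])
    (hD : D = ![1/3, 1/3, 1/3])
    (hxA : x A = ![1, 1, 0]) (hxB : x B = ![0, 1, 1])
    (hxC : x C = ![1, 0, 1]) (hxD : x D = ![0, 1, 1])
    (hDSIC : ∀ t ∈ ({A, B, C, D} : Set (Fin 3 → ℝ)),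
      ∀ t' ∈ ({A, B, C, D} : Set (Fin 3 → ℝ)),
        dot t (x t) - p t ≥ dot t (x t') - p t') :
    p A = p B ∧ p B = p C ∧ p C = p D := by
  have hAmem : A ∈ ({A, B, C, D} : Set (Fin 3 → ℝ)) := by left; rfl
  have hBmem : B ∈ ({A, B, C, D} : Set (Fin 3 → ℝ)) := by right; left; rfl
  have hCmem : C ∈ ({A, B, C, D} : Set (Fin 3 → ℝ)) := by right; right; left; rfl
  have hDmem : D ∈ ({A, B, C, D} : Set (Fin 3 → ℝ)) := by right; right; right; rfl
  have h1 := hDSIC A hAmem C hCmem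
  have h2 := hDSIC B hBmem A hAmem
  have h3 := hDSIC C hCmem B hBmem
  have h4 := hDSIC B hBmem D hDmem
  have h5 := hDSIC D hDmem B hBmem
  simp only [hxA, hxB, hxC, hxD] at h1 h2 h3 h4 h5
  simp [dot, hA, hB, hC, hD, Fin.sum_univ_three] at h1 h2 h3 h4 h5
  rw [hA, hB, hC, hD]
  norm_num at h1 h2 h3 h4 h5 ⊢
  refine ⟨by linarith, by linarith, by linarith⟩
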